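/- Bates' function B(x,y) = 2 + xy/(√(1+x²)√(1+y²)) satisfies (1 + B_x²) B_{xy} - B_x B_y B_{xx} > 0 at every point of ℝ²; in particular the first Cartesian umbilic identifier d₁ never vanishes. -/

import Mathlib

noncomputable def B (x y : ℝ) : ℝ :=
  2 + x * y / (Real.sqrt (1 + x ^ 2) * Real.sqrt (1 + y ^ 2))

noncomputable def Bx (x y : ℝ) : ℝ := deriv (fun t => B t y) x
noncomputable def By (x y : ℝ) : ℝ := deriv (fun t => B x t) y
noncomputable def Bxx (x y : ℝ) : ℝ := deriv (fun t => Bx t y) x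
noncomputable def Bxy (x y : ℝ) : ℝ := deriv (fun t => Bx x t) y

lemma sq_sqrt' (x : ℝ) : Real.sqrt (1 + x ^ 2) ^ 2 = 1 + x ^ 2 :=
  Real.sq_sqrt (by positivity)

lemma sqrt_pos' (x : ℝ) : 0 < Real.sqrt (1 + x ^ 2) :=
  Real.sqrt_pos.mpr (by positivity)

lemma hasDerivAt_sqrt' (x : ℝ) :
    HasDerivAt (fun t : ℝ => Real.sqrt (1 + t ^ 2)) (x / Real.sqrt (1 + x ^ 2)) x := by
  have h1 : HasDerivAt (fun t : ℝ => 1 + t ^ 2) (2 * x) x := by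
    simpa using (hasDerivAt_pow 2 x).const_add 1
  have h2 := (Real.hasDerivAt_sqrt (x := 1 + x ^ 2) (by positivity)).comp x h1
  refine h2.congr_deriv ?_
  symm
  have := (sqrt_pos' x).ne'
  field_simp

lemma hasDerivAt_f (x : ℝ) :
    HasDerivAt (fun t : ℝ => t / Real.sqrt (1 + t ^ 2))
      (1 / Real.sqrt (1 + x ^ 2) ^ 3) x := by
  have h := (hasDerivAt_id x).div (hasDerivAt_sqrt' x) (sqrt_pos' x).ne'
  refine h.congr_deriv ?_
  symm
  have hs := sq_sqrt' x
  have hpos := (sqrt_pos' x).ne'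
  field_simp
  simp only [id]
  linear_combination -hs

lemma hasDerivAt_g (x : ℝ) :
    HasDerivAt (fun t : ℝ => 1 / Real.sqrt (1 + t ^ 2) ^ 3)
      (-3 * x / Real.sqrt (1 + x ^ 2) ^ 5) x := by
  have h3 : HasDerivAt (fun t : ℝ => Real.sqrt (1 + t ^ 2) ^ 3)
      (3 * Real.sqrt (1 + x ^ 2) ^ 2 * (x / Real.sqrt (1 + x ^ 2))) x := by
    simpa using (hasDerivAt_sqrt' x).fun_pow 3
  have h := h3.inv (by positivity)
  simp only [one_div]
  refine h.congr_deriv ?_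
  symm
  have hpos := (sqrt_pos' x).ne'
  have hs := sq_sqrt' x
  field_simp

lemma Bx_eq (x y : ℝ) :
    Bx x y = y / (Real.sqrt (1 + x ^ 2) ^ 3 * Real.sqrt (1 + y ^ 2)) := by
  unfold Bx B
  have h : (fun t : ℝ => 2 + t * y / (Real.sqrt (1 + t ^ 2) * Real.sqrt (1 + y ^ 2)))
      = fun t : ℝ => 2 + (t / Real.sqrt (1 + t ^ 2)) * (y / Real.sqrt (1 + y ^ 2)) := by
    funext t; rw [mul_div_mul_comm]
  rw [h]
  rw [(((hasDerivAt_f x).mul_const (y / Real.sqrt (1 + y ^ 2))).const_add 2).deriv]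
  rw [div_mul_div_comm, one_mul]

lemma By_eq (x y : ℝ) :
    By x y = x / (Real.sqrt (1 + x ^ 2) * Real.sqrt (1 + y ^ 2) ^ 3) := by
  unfold By B
  have h : (fun t : ℝ => 2 + x * t / (Real.sqrt (1 + x ^ 2) * Real.sqrt (1 + t ^ 2)))
      = fun t : ℝ => 2 + (x / Real.sqrt (1 + x ^ 2)) * (t / Real.sqrt (1 + t ^ 2)) := by
    funext t; rw [mul_div_mul_comm]
  rw [h]
  rw [(((hasDerivAt_f y).const_mul (x / Real.sqrt (1 + x ^ 2))).const_add 2).deriv]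
  rw [div_mul_div_comm, mul_one]

lemma Bxx_eq (x y : ℝ) :
    Bxx x y = -3 * x * y / (Real.sqrt (1 + x ^ 2) ^ 5 * Real.sqrt (1 + y ^ 2)) := by
  unfold Bxx
  have h : (fun t : ℝ => Bx t y)
      = fun t : ℝ => (1 / Real.sqrt (1 + t ^ 2) ^ 3) * (y / Real.sqrt (1 + y ^ 2)) := by
    funext t; rw [Bx_eq, div_mul_div_comm, one_mul]
  rw [h, ((hasDerivAt_g x).mul_const (y / Real.sqrt (1 + y ^ 2))).deriv]
  rw [div_mul_div_comm]

lemma Bxy_eq (x y : ℝ) :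
    Bxy x y = 1 / (Real.sqrt (1 + x ^ 2) ^ 3 * Real.sqrt (1 + y ^ 2) ^ 3) := by
  unfold Bxy
  have h : (fun t : ℝ => Bx x t)
      = fun t : ℝ => (1 / Real.sqrt (1 + x ^ 2) ^ 3) * (t / Real.sqrt (1 + t ^ 2)) := by
    funext t; rw [Bx_eq]; field_simp
  rw [h, ((hasDerivAt_f y).const_mul (1 / Real.sqrt (1 + x ^ 2) ^ 3)).deriv]
  field_simp

/-- The first Cartesian umbilic identifier of Bates' function is everywhere positive;
in particular it never vanishes. -/
theorem bates_d1_pos : ∀ x y : ℝ,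
    0 < (1 + Bx x y ^ 2) * Bxy x y - Bx x y * By x y * Bxx x y := by
  intro x y
  rw [Bx_eq, By_eq, Bxx_eq, Bxy_eq]
  have ha := sqrt_pos' x
  have hb := sqrt_pos' y
  have key : (1 + (y / (Real.sqrt (1 + x ^ 2) ^ 3 * Real.sqrt (1 + y ^ 2))) ^ 2) *
        (1 / (Real.sqrt (1 + x ^ 2) ^ 3 * Real.sqrt (1 + y ^ 2) ^ 3)) -
        y / (Real.sqrt (1 + x ^ 2) ^ 3 * Real.sqrt (1 + y ^ 2)) *
        (x / (Real.sqrt (1 + x ^ 2) * Real.sqrt (1 + y ^ 2) ^ 3)) *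
        (-3 * x * y / (Real.sqrt (1 + x ^ 2) ^ 5 * Real.sqrt (1 + y ^ 2)))
      = 1 / (Real.sqrt (1 + x ^ 2) ^ 3 * Real.sqrt (1 + y ^ 2) ^ 3) +
        y ^ 2 * (1 + 3 * x ^ 2) / (Real.sqrt (1 + x ^ 2) ^ 9 * Real.sqrt (1 + y ^ 2) ^ 5) := by
    field_simp
    ring
  rw [key]
  positivity
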